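/- Let 1 < p ≤ q < ∞, let v, w be weights on (a,b), and suppose that C > 0 is such that (∫_a^b (∫_a^t f)^q w(t) dt)^{1/q} ≤ C (∫_a^b f^p v)^{1/p} holds for all f ∈ M⁺(a,b). Then for every ε > 0 there is a constant c, depending only on p, q and ε, such that A_ε ≤ c · C; in particular A_ε < ∞ for every ε > 0. -/

import Mathlib

open MeasureTheory Set Filter
open scoped ENNReal Topology

/-- The open subinterval of `ℝ` with extended-real endpoints `a` and `b`. -/
def EIoo (a b : EReal) : Set ℝ := {x : ℝ | a < (x : EReal) ∧ (x : EReal) < b}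

/-- A weight on `(a,b)`: a measurable function which is positive and finite a.e. on `(a,b)`. -/
def IsWeight (a b : EReal) (v : ℝ → ℝ≥0∞) : Prop :=
  Measurable v ∧ ∀ᵐ x ∂(volume.restrict (EIoo a b)), v x ≠ 0 ∧ v x ≠ ∞

/-- The function `V` in the case `1 < p`:  `V(t) = (∫_a^t v^{1-p'})^{1/p'}`, `p' = p/(p-1)`. -/
noncomputable def Vp (a : EReal) (p : ℝ) (v : ℝ → ℝ≥0∞) (t : ℝ) : ℝ≥0∞ :=
  (∫⁻ s in EIoo a (t : EReal), v s ^ (1 - p / (p - 1))) ^ ((p - 1) / p)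

/-- The function `V` in the case `p = 1`:  `V(t) = ess sup_{s ∈ (a,t)} 1/v(s)`. -/
noncomputable def V1 (a : EReal) (v : ℝ → ℝ≥0∞) (t : ℝ) : ℝ≥0∞ :=
  essSup (fun s => (v s)⁻¹) (volume.restrict (EIoo a (t : EReal)))

/-- `A_ε = sup_{t ∈ (a,b)} V(t)^{-ε} (∫_a^t V^{q(ε+1)} w)^{1/q}`. -/
noncomputable def Aeps (a b : EReal) (q ε : ℝ) (V w : ℝ → ℝ≥0∞) : ℝ≥0∞ :=
  ⨆ t ∈ EIoo a b,
    V t ^ (-ε) * (∫⁻ s in EIoo a (t : EReal), V s ^ (q * (ε + 1)) * w s) ^ (1 / q)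

/-- `B_{1,ε} = (∫_a^b (∫_a^t V^{q(ε+1)} w)^{r/p} V(t)^{q(ε+1)-εr} w(t) dt)^{1/r}`. -/
noncomputable def B1 (a b : EReal) (p q r ε : ℝ) (V w : ℝ → ℝ≥0∞) : ℝ≥0∞ :=
  (∫⁻ t in EIoo a b,
      (∫⁻ s in EIoo a (t : EReal), V s ^ (q * (ε + 1)) * w s) ^ (r / p) *
        (V t ^ (q * (ε + 1) - ε * r) * w t)) ^ (1 / r)

/-- The weighted Hardy inequality with constant `C`, case `p > 1`
(`RHS = C (∫_a^b f^p v)^{1/p}`). -/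
def HardyP (a b : EReal) (p q : ℝ) (v w : ℝ → ℝ≥0∞) (C : ℝ≥0∞) : Prop :=
  ∀ f : ℝ → ℝ≥0∞, Measurable f →
    (∫⁻ t in EIoo a b, (∫⁻ s in EIoo a (t : EReal), f s) ^ q * w t) ^ (1 / q)
      ≤ C * (∫⁻ x in EIoo a b, f x ^ p * v x) ^ (1 / p)

/-- The weighted Hardy inequality with constant `C`, case `p = 1`
(`RHS = C ∫_a^b f v`). -/
def Hardy1 (a b : EReal) (q : ℝ) (v w : ℝ → ℝ≥0∞) (C : ℝ≥0∞) : Prop :=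
  ∀ f : ℝ → ℝ≥0∞, Measurable f →
    (∫⁻ t in EIoo a b, (∫⁻ s in EIoo a (t : EReal), f s) ^ q * w t) ^ (1 / q)
      ≤ C * ∫⁻ x in EIoo a b, f x * v x

/-- `A_ε < ∞`, including the requirement that every subexpression (in particular
`V(t)` and the inner integral) is finite for every `t ∈ (a,b)`. -/
def AFin (a b : EReal) (q ε : ℝ) (V w : ℝ → ℝ≥0∞) : Prop :=
  (∀ t ∈ EIoo a b,
      V t ≠ ∞ ∧ (∫⁻ s in EIoo a (t : EReal), V s ^ (q * (ε + 1)) * w s) ≠ ∞) ∧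
    Aeps a b q ε V w ≠ ∞

/-- `B_{1,ε} < ∞`, including the requirement that every subexpression (in particular
`V(t)` and the inner integral) is finite for every `t ∈ (a,b)`. -/
def B1Fin (a b : EReal) (p q r ε : ℝ) (V w : ℝ → ℝ≥0∞) : Prop :=
  (∀ t ∈ EIoo a b,
      V t ≠ ∞ ∧ (∫⁻ s in EIoo a (t : EReal), V s ^ (q * (ε + 1)) * w s) ≠ ∞) ∧
    B1 a b p q r ε V w ≠ ∞

/-! ### auxiliary lemmas -/

lemma EIoo_open (a b : EReal) : IsOpen (EIoo a b) := by
  have : EIoo a b = (Real.toEReal) ⁻¹' (Set.Ioo a b) := rfl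
  rw [this]; exact isOpen_Ioo.preimage continuous_coe_real_ereal

lemma EIoo_meas (a b : EReal) : MeasurableSet (EIoo a b) := (EIoo_open a b).measurableSet

lemma EIoo_mono_right {a : EReal} {x y : ℝ} (h : x ≤ y) : EIoo a ↑x ⊆ EIoo a ↑y := by
  intro s hs; exact ⟨hs.1, lt_of_lt_of_le hs.2 (EReal.coe_le_coe_iff.2 h)⟩

lemma two_rpow_ne_zero (y : ℝ) : ((2:ℝ≥0∞)) ^ y ≠ 0 :=
  (ENNReal.rpow_pos (by norm_num) (by norm_num)).ne'

lemma two_rpow_ne_top (y : ℝ) : ((2:ℝ≥0∞)) ^ y ≠ ∞ := by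
  simp [ENNReal.rpow_eq_top_iff]

/-- The key testing consequence of the Hardy inequality. -/
lemma key_bound (p q : ℝ) (hp : 1 < p) (hq : 0 < q)
    (a b : EReal) (v w : ℝ → ℝ≥0∞) (hv : IsWeight a b v) (hw : Measurable w)
    (C : ℝ≥0∞) (hH : HardyP a b p q v w C)
    (x t : ℝ) (hax : a < ↑x) (hxt : x < t) (htb : (t:EReal) < b)
    (hU0 : (∫⁻ s in EIoo a ↑x, v s ^ (1 - p/(p-1))) ≠ 0)
    (hUT : (∫⁻ s in EIoo a ↑x, v s ^ (1 - p/(p-1))) ≠ ∞) :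
    ∫⁻ s in Set.Ioo x t, w s
      ≤ C ^ q * (∫⁻ s in EIoo a ↑x, v s ^ (1 - p/(p-1))) ^ (q/p - q) := by
  have hp0 : (0:ℝ) < p := lt_trans one_pos hp
  set σ : ℝ → ℝ≥0∞ := fun s => v s ^ (1 - p/(p-1)) with hσ
  have hσm : Measurable σ := hv.1.pow_const _
  set U : ℝ≥0∞ := ∫⁻ s in EIoo a ↑x, σ s with hUdef
  set f : ℝ → ℝ≥0∞ := (EIoo a ↑x).indicator σ with hf
  have hfm : Measurable f := hσm.indicator (EIoo_meas _ _)
  have hxb : (x:EReal) < b := lt_trans (EReal.coe_lt_coe_iff.2 hxt) htb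
  have hsub2 : EIoo a ↑x ⊆ EIoo a b := fun s hs => ⟨hs.1, lt_trans hs.2 hxb⟩
  have hinner : ∀ t' : ℝ, x ≤ t' → ∫⁻ s in EIoo a ↑t', f s = U := by
    intro t' h
    rw [hf, lintegral_indicator (EIoo_meas a ↑x),
      Measure.restrict_restrict (EIoo_meas a ↑x),
      Set.inter_eq_self_of_subset_left (EIoo_mono_right h)]
  have hsub : Set.Ioo x t ⊆ EIoo a b := by
    intro s hs
    exact ⟨lt_trans hax (EReal.coe_lt_coe_iff.2 hs.1),
      lt_trans (EReal.coe_lt_coe_iff.2 hs.2) htb⟩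
  have hLHS : U ^ q * ∫⁻ s in Set.Ioo x t, w s
      ≤ ∫⁻ t' in EIoo a b, (∫⁻ s in EIoo a ↑t', f s) ^ q * w t' := by
    rw [← lintegral_const_mul _ hw]
    refine le_trans (le_of_eq ?_) (lintegral_mono_set hsub)
    refine setLIntegral_congr_fun measurableSet_Ioo ?_
    intro t' ht'
    dsimp only
    rw [hinner t' ht'.1.le]
  have hRHS : ∫⁻ s in EIoo a b, f s ^ p * v s = U := by
    have h1 : ∀ s, f s ^ p * v s = (EIoo a ↑x).indicator (fun s => σ s ^ p * v s) s := by
      intro s; by_cases hs : s ∈ EIoo a ↑x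
      · simp [hf, Set.indicator_of_mem hs]
      · simp [hf, Set.indicator_of_notMem hs, ENNReal.zero_rpow_of_pos hp0]
    rw [lintegral_congr h1, lintegral_indicator (EIoo_meas a ↑x),
      Measure.restrict_restrict (EIoo_meas a ↑x),
      Set.inter_eq_self_of_subset_left hsub2, hUdef]
    apply lintegral_congr_ae
    have hae : ∀ᵐ s ∂(volume.restrict (EIoo a ↑x)), v s ≠ 0 ∧ v s ≠ ∞ :=
      hv.2.filter_mono (ae_mono (Measure.restrict_mono hsub2 le_rfl))
    filter_upwards [hae] with s hs
    have hvs0 := hs.1; have hvsT := hs.2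
    have hp1 : p - 1 ≠ 0 := by linarith
    calc σ s ^ p * v s = v s ^ ((1 - p/(p-1)) * p) * v s ^ (1:ℝ) := by
          rw [hσ, ← ENNReal.rpow_mul, ENNReal.rpow_one]
      _ = v s ^ ((1 - p/(p-1)) * p + 1) := (ENNReal.rpow_add _ _ hvs0 hvsT).symm
      _ = σ s := by rw [hσ, show (1 - p/(p-1)) * p + 1 = 1 - p/(p-1) by field_simp; ring]
  have h := hH f hfm
  rw [hRHS] at h
  have h2 : U ^ q * ∫⁻ s in Set.Ioo x t, w s ≤ C ^ q * U ^ (q/p) := by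
    calc U ^ q * ∫⁻ s in Set.Ioo x t, w s
        ≤ ∫⁻ t' in EIoo a b, (∫⁻ s in EIoo a ↑t', f s) ^ q * w t' := hLHS
      _ = ((∫⁻ t' in EIoo a b, (∫⁻ s in EIoo a ↑t', f s) ^ q * w t') ^ (1/q)) ^ q := by
          rw [← ENNReal.rpow_mul, one_div, inv_mul_cancel₀ hq.ne', ENNReal.rpow_one]
      _ ≤ (C * U ^ (1/p)) ^ q := ENNReal.rpow_le_rpow h hq.le
      _ = C ^ q * U ^ (q/p) := by
          rw [ENNReal.mul_rpow_of_nonneg _ _ hq.le, ← ENNReal.rpow_mul,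
            show (1/p) * q = q/p by ring]
  have hcan : U ^ (-q) * U ^ q = 1 := by
    rw [← ENNReal.rpow_add _ _ hU0 hUT, neg_add_cancel, ENNReal.rpow_zero]
  calc ∫⁻ s in Set.Ioo x t, w s
      = U ^ (-q) * U ^ q * ∫⁻ s in Set.Ioo x t, w s := by rw [hcan, one_mul]
    _ = U ^ (-q) * (U ^ q * ∫⁻ s in Set.Ioo x t, w s) := mul_assoc _ _ _
    _ ≤ U ^ (-q) * (C ^ q * U ^ (q/p)) := mul_le_mul_right h2 _
    _ = C ^ q * (U ^ (q/p) * U ^ (-q)) := by ring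
    _ = C ^ q * U ^ (q/p - q) := by
        rw [← ENNReal.rpow_add _ _ hU0 hUT, show q/p + -q = q/p - q by ring]

/-- Bound for the superlevel sets of `U`. -/
lemma slam_bound (q δ : ℝ) (hδ : δ ≤ 0) (a b : EReal) (w : ℝ → ℝ≥0∞) (hw : Measurable w)
    (U : ℝ → ℝ≥0∞) (hUmono : Monotone U) (C : ℝ≥0∞)
    (key : ∀ y t : ℝ, a < ↑y → y < t → (t:EReal) < b → U y ≠ 0 → U y ≠ ∞ →
      ∫⁻ s in Set.Ioo y t, w s ≤ C ^ q * U y ^ δ)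
    (t : ℝ) (htb : (t:EReal) < b) (hUt : U t ≠ ∞)
    (lam : ℝ≥0∞) (hl0 : lam ≠ 0) :
    ∫⁻ s in {s : ℝ | s ∈ EIoo a ↑t ∧ lam < U s}, w s ≤ C ^ q * lam ^ δ := by
  set S : Set ℝ := {s : ℝ | s ∈ EIoo a ↑t ∧ lam < U s} with hS
  set ν : Measure ℝ := volume.withDensity w with hν
  have hUmeas : Measurable U := hUmono.measurable
  have hSmeas : MeasurableSet S := by
    have : S = EIoo a ↑t ∩ U ⁻¹' (Set.Ioi lam) := rfl
    rw [this]; exact (EIoo_meas _ _).inter (hUmeas measurableSet_Ioi)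
  have hνeq : ∀ A : Set ℝ, MeasurableSet A → ν A = ∫⁻ s in A, w s := by
    intro A hA; rw [hν, withDensity_apply _ hA]
  rw [← hνeq S hSmeas]
  -- the pointwise bound
  have hpoint : ∀ y ∈ S, ν (Set.Ioo y t) ≤ C ^ q * lam ^ δ := by
    intro y hy
    obtain ⟨⟨hay, hyt⟩, hly⟩ := hy
    have hyt' : y < t := EReal.coe_lt_coe_iff.1 hyt
    have hUy0 : U y ≠ 0 := fun h => by simp [h] at hly
    have hUyT : U y ≠ ∞ := fun h =>
      hUt (top_le_iff.1 (h ▸ hUmono hyt'.le))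
    have h1 : ν (Set.Ioo y t) ≤ C ^ q * U y ^ δ := by
      rw [hνeq _ measurableSet_Ioo]
      exact key y t hay hyt' htb hUy0 hUyT
    refine le_trans h1 (mul_le_mul_right ?_ _)
    have h3 : lam ^ (-δ) ≤ U y ^ (-δ) := ENNReal.rpow_le_rpow hly.le (neg_nonneg.2 hδ)
    calc U y ^ δ = (U y ^ (-δ))⁻¹ := by rw [← ENNReal.rpow_neg, neg_neg]
      _ ≤ (lam ^ (-δ))⁻¹ := ENNReal.inv_le_inv.2 h3
      _ = lam ^ δ := by rw [← ENNReal.rpow_neg, neg_neg]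
  rcases Set.eq_empty_or_nonempty S with hSe | hne
  · rw [hSe]; simp
  have hνsingleton : ∀ m : ℝ, ν {m} = 0 := fun m =>
    (withDensity_absolutelyContinuous volume w) (measure_singleton m)
  by_cases hbdd : BddBelow S
  · set m := sInf S with hm
    have hyn : ∀ n : ℕ, ∃ y ∈ S, y < m + 1/(n+1) := by
      intro n
      apply exists_lt_of_csInf_lt hne
      have : (0:ℝ) < 1/(n+1) := by positivity
      linarith
    choose y hyS hylt using hyn
    have hcover : S ⊆ {m} ∪ ⋃ n, Set.Ioo (y n) t := by
      intro s hs
      have hst : s < t := EReal.coe_lt_coe_iff.1 hs.1.2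
      have hms : m ≤ s := csInf_le hbdd hs
      rcases eq_or_lt_of_le hms with h | h
      · exact Or.inl (by simp [← h])
      · obtain ⟨n, hn⟩ := exists_nat_one_div_lt (show (0:ℝ) < s - m by linarith)
        exact Or.inr (Set.mem_iUnion.2 ⟨n, ⟨by have := hylt n; linarith, hst⟩⟩)
    have hdir : Directed (· ⊆ ·) (fun n => Set.Ioo (y n) t) := by
      intro n k
      rcases le_total (y n) (y k) with h | h
      · exact ⟨n, Set.Ioo_subset_Ioo_left le_rfl, Set.Ioo_subset_Ioo_left h⟩
      · exact ⟨k, Set.Ioo_subset_Ioo_left h, Set.Ioo_subset_Ioo_left le_rfl⟩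
    calc ν S ≤ ν ({m} ∪ ⋃ n, Set.Ioo (y n) t) := measure_mono hcover
      _ ≤ ν {m} + ν (⋃ n, Set.Ioo (y n) t) := measure_union_le _ _
      _ = ν (⋃ n, Set.Ioo (y n) t) := by rw [hνsingleton m, zero_add]
      _ = ⨆ n, ν (Set.Ioo (y n) t) := hdir.measure_iUnion
      _ ≤ C ^ q * lam ^ δ := iSup_le fun n => hpoint (y n) (hyS n)
  · have hyn : ∀ n : ℕ, ∃ y ∈ S, y < -(n:ℝ) := by
      intro n
      rcases not_bddBelow_iff.1 hbdd (-(n:ℝ)) with ⟨x, hx, h⟩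
      exact ⟨x, hx, h⟩
    choose y hyS hylt using hyn
    have hcover : S ⊆ ⋃ n, Set.Ioo (y n) t := by
      intro s hs
      have hst : s < t := EReal.coe_lt_coe_iff.1 hs.1.2
      obtain ⟨n, hn⟩ := exists_nat_gt (-s)
      exact Set.mem_iUnion.2 ⟨n, ⟨by have := hylt n; linarith, hst⟩⟩
    have hdir : Directed (· ⊆ ·) (fun n => Set.Ioo (y n) t) := by
      intro n k
      rcases le_total (y n) (y k) with h | h
      · exact ⟨n, Set.Ioo_subset_Ioo_left le_rfl, Set.Ioo_subset_Ioo_left h⟩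
      · exact ⟨k, Set.Ioo_subset_Ioo_left h, Set.Ioo_subset_Ioo_left le_rfl⟩
    calc ν S ≤ ν (⋃ n, Set.Ioo (y n) t) := measure_mono hcover
      _ = ⨆ n, ν (Set.Ioo (y n) t) := hdir.measure_iUnion
      _ ≤ C ^ q * lam ^ δ := iSup_le fun n => hpoint (y n) (hyS n)

/-- Closed form of the geometric sum. -/
lemma alg_sum (θ δ κ q : ℝ) (hκ : θ + δ = κ) (x C : ℝ≥0∞) (hx0 : x ≠ 0) (hxT : x ≠ ∞) :
    ∑' k : ℕ, (x * ((2:ℝ≥0∞))⁻¹ ^ k) ^ θ * (C ^ q * (x * ((2:ℝ≥0∞))⁻¹ ^ (k+1)) ^ δ)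
      = C ^ q * x ^ κ * (2:ℝ≥0∞) ^ (-δ) * (1 - (2:ℝ≥0∞) ^ (-κ))⁻¹ := by
  have h20 : (2:ℝ≥0∞) ≠ 0 := by norm_num
  have h2T : (2:ℝ≥0∞) ≠ ∞ := by norm_num
  have hr : ∀ k : ℕ, ((2:ℝ≥0∞))⁻¹ ^ k = (2:ℝ≥0∞) ^ (-(k:ℝ)) := by
    intro k; rw [ENNReal.rpow_neg, ENNReal.rpow_natCast, ENNReal.inv_pow]
  have hterm : ∀ k : ℕ,
      (x * ((2:ℝ≥0∞))⁻¹ ^ k) ^ θ * (C ^ q * (x * ((2:ℝ≥0∞))⁻¹ ^ (k+1)) ^ δ)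
        = (C ^ q * x ^ κ * (2:ℝ≥0∞) ^ (-δ)) * ((2:ℝ≥0∞) ^ (-κ)) ^ k := by
    intro k
    rw [hr k, hr (k+1),
      ENNReal.mul_rpow_of_ne_zero hx0 (two_rpow_ne_zero _),
      ENNReal.mul_rpow_of_ne_zero hx0 (two_rpow_ne_zero _),
      ← ENNReal.rpow_mul, ← ENNReal.rpow_mul]
    push_cast
    calc x ^ θ * (2:ℝ≥0∞) ^ (-(k:ℝ) * θ) * (C ^ q * (x ^ δ * (2:ℝ≥0∞) ^ (-((k:ℝ)+1) * δ)))
        = C ^ q * (x ^ θ * x ^ δ) * ((2:ℝ≥0∞) ^ (-(k:ℝ) * θ) * (2:ℝ≥0∞) ^ (-((k:ℝ)+1) * δ)) := by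
          ring
      _ = C ^ q * x ^ κ * (2:ℝ≥0∞) ^ (-(k:ℝ) * θ + -((k:ℝ)+1) * δ) := by
          rw [← ENNReal.rpow_add _ _ hx0 hxT, hκ, ← ENNReal.rpow_add _ _ h20 h2T]
      _ = C ^ q * x ^ κ * (2:ℝ≥0∞) ^ (-δ + -κ * (k:ℝ)) := by
          rw [show -(k:ℝ) * θ + -((k:ℝ)+1) * δ = -δ + -(θ+δ) * (k:ℝ) by ring, hκ]
      _ = (C ^ q * x ^ κ * (2:ℝ≥0∞) ^ (-δ)) * ((2:ℝ≥0∞) ^ (-κ)) ^ k := by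
          rw [ENNReal.rpow_add _ _ h20 h2T, ENNReal.rpow_mul, ENNReal.rpow_natCast]; ring
  calc ∑' k : ℕ, (x * ((2:ℝ≥0∞))⁻¹ ^ k) ^ θ * (C ^ q * (x * ((2:ℝ≥0∞))⁻¹ ^ (k+1)) ^ δ)
      = ∑' k : ℕ, (C ^ q * x ^ κ * (2:ℝ≥0∞) ^ (-δ)) * ((2:ℝ≥0∞) ^ (-κ)) ^ k := by
        exact tsum_congr hterm
    _ = (C ^ q * x ^ κ * (2:ℝ≥0∞) ^ (-δ)) * ∑' k : ℕ, ((2:ℝ≥0∞) ^ (-κ)) ^ k :=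
        ENNReal.tsum_mul_left
    _ = C ^ q * x ^ κ * (2:ℝ≥0∞) ^ (-δ) * (1 - (2:ℝ≥0∞) ^ (-κ))⁻¹ := by
        rw [ENNReal.tsum_geometric]

/-- The dyadic decomposition bound. -/
lemma sum_bound (q δ θ κ : ℝ) (hθ : 0 < θ) (hκ : θ + δ = κ)
    (a b : EReal) (w : ℝ → ℝ≥0∞) (hw : Measurable w)
    (U : ℝ → ℝ≥0∞) (hUmono : Monotone U) (C : ℝ≥0∞)
    (t : ℝ) (hta : a < ↑t) (htb : (t:EReal) < b) (hx0 : U t ≠ 0) (hxT : U t ≠ ∞)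
    (hUt : ∀ s ∈ EIoo a ↑t, U s ≤ U t)
    (hSb : ∀ lam : ℝ≥0∞, lam ≠ 0 → lam ≠ ∞ →
      ∫⁻ s in {s : ℝ | s ∈ EIoo a ↑t ∧ lam < U s}, w s ≤ C ^ q * lam ^ δ) :
    ∫⁻ s in EIoo a ↑t, U s ^ θ * w s
      ≤ C ^ q * U t ^ κ * (2:ℝ≥0∞) ^ (-δ) * (1 - (2:ℝ≥0∞) ^ (-κ))⁻¹ := by
  classical
  set x : ℝ≥0∞ := U t with hx
  set r : ℝ≥0∞ := (2:ℝ≥0∞)⁻¹ with hrdef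
  have hUmeas : Measurable U := hUmono.measurable
  have hrk0 : ∀ k : ℕ, r ^ k ≠ 0 := fun k =>
    pow_ne_zero k (ENNReal.inv_ne_zero.2 (by norm_num))
  have hrkT : ∀ k : ℕ, r ^ k ≠ ∞ := fun k =>
    ENNReal.pow_ne_top (by simp [hrdef])
  set E : ℕ → Set ℝ := fun k =>
    EIoo a ↑t ∩ U ⁻¹' (Set.Ioi (x * r ^ (k+1)) ∩ Set.Iic (x * r ^ k)) with hE
  set Einf : Set ℝ := EIoo a ↑t ∩ U ⁻¹' {0} with hEinf
  have hEmeas : ∀ k, MeasurableSet (E k) := fun k =>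
    (EIoo_meas _ _).inter (hUmeas (measurableSet_Ioi.inter measurableSet_Iic))
  have hEinfmeas : MeasurableSet Einf := (EIoo_meas _ _).inter (hUmeas (measurableSet_singleton 0))
  have h2k0 : ∀ k : ℕ, ((2:ℝ≥0∞)) ^ k ≠ 0 := fun k => pow_ne_zero k (by norm_num)
  have h2kT : ∀ k : ℕ, ((2:ℝ≥0∞)) ^ k ≠ ∞ := fun k => ENNReal.pow_ne_top (by norm_num)
  have hrinv : ∀ k : ℕ, r ^ k = ((2:ℝ≥0∞) ^ k)⁻¹ := fun k => by
    rw [hrdef, ENNReal.inv_pow]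
  -- the covering
  have hcover : EIoo a ↑t ⊆ Einf ∪ ⋃ k, E k := by
    intro s hs
    by_cases hU0 : U s = 0
    · exact Or.inl ⟨hs, hU0⟩
    · refine Or.inr (Set.mem_iUnion.2 ?_)
      have hUsx : U s ≤ x := hUt s hs
      have hUsT : U s ≠ ∞ := fun h => hxT (top_le_iff.1 (h ▸ hUsx))
      have hex : ∃ n : ℕ, x < U s * 2 ^ (n+1) := by
        obtain ⟨n, hn⟩ := ENNReal.exists_nat_gt (ENNReal.div_lt_top hxT hU0).ne
        refine ⟨n, ?_⟩
        have h1 : x / U s < 2 ^ (n+1) := by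
          calc x / U s < n := hn
            _ ≤ 2 ^ n := by exact_mod_cast Nat.cast_le.2 (Nat.lt_two_pow_self (n := n)).le
            _ ≤ 2 ^ (n+1) := by
                exact_mod_cast pow_le_pow_right₀ (by norm_num : (1:ℝ≥0∞) ≤ 2) (Nat.le_succ n)
        have h2 := (ENNReal.div_lt_iff (Or.inl hU0) (Or.inl hUsT)).1 h1
        rwa [mul_comm] at h2
      set k := Nat.find hex with hk
      have hk1 : x < U s * 2 ^ (k+1) := Nat.find_spec hex
      refine ⟨k, hs, ?_, ?_⟩
      · -- x * r^(k+1) < U s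
        show x * r ^ (k+1) < U s
        rw [hrinv, ← div_eq_mul_inv]
        exact (ENNReal.div_lt_iff (Or.inl (h2k0 _)) (Or.inl (h2kT _))).2 hk1
      · -- U s ≤ x * r^k
        show U s ≤ x * r ^ k
        rcases Nat.eq_zero_or_pos k with h0 | hpos
        · rw [h0]; simpa using hUsx
        · obtain ⟨j, hj⟩ := Nat.exists_eq_succ_of_ne_zero hpos.ne'
          have hnot : ¬ x < U s * 2 ^ (j+1) := Nat.find_min hex (by omega)
          rw [hrinv, ← div_eq_mul_inv, hj]
          exact (ENNReal.le_div_iff_mul_le (Or.inl (h2k0 _)) (Or.inl (h2kT _))).2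
            (not_lt.1 hnot)
  -- integral over Einf vanishes
  have hIinf : ∫⁻ s in Einf, U s ^ θ * w s = 0 := by
    rw [setLIntegral_congr_fun hEinfmeas
      (fun s hs => ?_), lintegral_zero]
    rw [show U s = 0 from hs.2, ENNReal.zero_rpow_of_pos hθ, zero_mul]
  -- per piece bound
  have hpiece : ∀ k : ℕ, ∫⁻ s in E k, U s ^ θ * w s
      ≤ (x * r ^ k) ^ θ * (C ^ q * (x * r ^ (k+1)) ^ δ) := by
    intro k
    have h1 : ∫⁻ s in E k, U s ^ θ * w s ≤ ∫⁻ s in E k, (x * r ^ k) ^ θ * w s := by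
      refine setLIntegral_mono' (hEmeas k) (fun s hs => ?_)
      exact mul_le_mul_left (ENNReal.rpow_le_rpow hs.2.2 hθ.le) _
    refine le_trans h1 ?_
    rw [lintegral_const_mul _ hw]
    refine mul_le_mul_right ?_ _
    refine le_trans (lintegral_mono_set (fun s hs => ?_)) (hSb (x * r ^ (k+1))
      (mul_ne_zero hx0 (hrk0 _)) (ENNReal.mul_ne_top hxT (hrkT _)))
    exact ⟨hs.1, hs.2.1⟩
  calc ∫⁻ s in EIoo a ↑t, U s ^ θ * w s
      ≤ ∫⁻ s in Einf ∪ ⋃ k, E k, U s ^ θ * w s := lintegral_mono_set hcover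
    _ ≤ (∫⁻ s in Einf, U s ^ θ * w s) + ∫⁻ s in ⋃ k, E k, U s ^ θ * w s :=
        lintegral_union_le _ _ _
    _ ≤ 0 + ∑' k, ∫⁻ s in E k, U s ^ θ * w s := by
        rw [hIinf]; exact add_le_add le_rfl (lintegral_iUnion_le _ _)
    _ ≤ ∑' k : ℕ, (x * r ^ k) ^ θ * (C ^ q * (x * r ^ (k+1)) ^ δ) := by
        rw [zero_add]; exact ENNReal.tsum_le_tsum hpiece
    _ = C ^ q * x ^ κ * (2:ℝ≥0∞) ^ (-δ) * (1 - (2:ℝ≥0∞) ^ (-κ))⁻¹ :=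
        alg_sum θ δ κ q hκ x C hx0 hxT

/-- necessity in the convex case `1 < p ≤ q < ∞`: if the Hardy inequality
holds with constant `C`, then `A_ε ≤ c · C` for every `ε > 0`, where `c` depends
only on `p, q, ε`. -/
theorem stmt4 (p q : ℝ) (hp : 1 < p) (hpq : p ≤ q) :
    ∀ ε : ℝ, 0 < ε → ∃ c : ℝ≥0∞, 0 < c ∧ c ≠ ∞ ∧
      ∀ (a b : EReal), a < b →
        ∀ v w : ℝ → ℝ≥0∞, IsWeight a b v → IsWeight a b w →
          ∀ C : ℝ≥0∞, 0 < C → C ≠ ∞ → HardyP a b p q v w C →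
            Aeps a b q ε (Vp a p v) w ≤ c * C := by
  intro ε hε
  have hp0 : (0:ℝ) < p := lt_trans one_pos hp
  have hq : (0:ℝ) < q := lt_of_lt_of_le hp0 hpq
  set pc : ℝ := (p-1)/p with hpcdef
  have hpc : 0 < pc := div_pos (by linarith) hp0
  set θ : ℝ := pc * (q * (ε+1)) with hθdef
  set δ : ℝ := q/p - q with hδdef
  set κ : ℝ := θ + δ with hκdef
  have hθpos : 0 < θ := by positivity
  have hκpos : 0 < κ := by
    rw [hκdef, hθdef, hδdef, hpcdef]
    have : (p-1)/p * (q * (ε+1)) + (q/p - q) = q * ε * ((p-1)/p) := by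
      field_simp; ring
    rw [this]; positivity
  have hzero : pc * (-ε) + κ * (1/q) = 0 := by
    rw [hκdef, hθdef, hδdef, hpcdef]
    field_simp
    ring
  set K : ℝ≥0∞ := (2:ℝ≥0∞) ^ (-δ) * (1 - (2:ℝ≥0∞) ^ (-κ))⁻¹ with hKdef
  have h2κlt : (2:ℝ≥0∞) ^ (-κ) < 1 := by
    rw [ENNReal.rpow_neg]
    exact ENNReal.inv_lt_one.2 (ENNReal.one_lt_rpow (by norm_num) hκpos)
  have hsub0 : (1 - (2:ℝ≥0∞) ^ (-κ)) ≠ 0 := by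
    rw [Ne, tsub_eq_zero_iff_le]
    exact not_le.2 h2κlt
  have hsubT : (1 - (2:ℝ≥0∞) ^ (-κ)) ≠ ∞ :=
    ne_top_of_le_ne_top ENNReal.one_ne_top tsub_le_self
  have hK0 : K ≠ 0 := mul_ne_zero (two_rpow_ne_zero _) (ENNReal.inv_ne_zero.2 hsubT)
  have hKT : K ≠ ∞ := ENNReal.mul_ne_top (two_rpow_ne_top _) (ENNReal.inv_ne_top.2 hsub0)
  refine ⟨K ^ (1/q), ENNReal.rpow_pos (pos_iff_ne_zero.2 hK0) hKT, ENNReal.rpow_ne_top_of_nonneg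
    (by positivity) hKT, ?_⟩
  intro a b hab v w hv hw C hC0 hCT hH
  set U : ℝ → ℝ≥0∞ := fun s => ∫⁻ x in EIoo a ↑s, v x ^ (1 - p/(p-1)) with hUdef
  have hUmono : Monotone U := fun s s' h => lintegral_mono_set (EIoo_mono_right h)
  have hVp : ∀ s : ℝ, Vp a p v s = U s ^ pc := fun s => rfl
  simp only [Aeps]
  refine iSup₂_le fun t ht => ?_
  obtain ⟨hta, htb⟩ := ht
  rcases eq_or_ne (U t) 0 with hUt0 | hUt0
  · -- degenerate: U t = 0
    have hIz : (∫⁻ s in EIoo a (t : EReal), Vp a p v s ^ (q * (ε + 1)) * w s) = 0 := by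
      rw [setLIntegral_congr_fun (EIoo_meas a ↑t)
        (fun s hs => ?_), lintegral_zero]
      have hUs : U s = 0 := le_antisymm
        (hUt0 ▸ hUmono (le_of_lt (EReal.coe_lt_coe_iff.1 hs.2))) zero_le
      rw [hVp, hUs, ENNReal.zero_rpow_of_pos hpc,
        ENNReal.zero_rpow_of_pos (by positivity), zero_mul]
    rw [hIz, ENNReal.zero_rpow_of_pos (by positivity), mul_zero]
    exact zero_le
  rcases eq_or_ne (U t) ∞ with hUtT | hUtT
  · -- degenerate: U t = ∞
    rw [hVp, hUtT, ENNReal.top_rpow_of_pos hpc, ENNReal.top_rpow_of_neg (by linarith), zero_mul]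
    exact zero_le
  -- main case
  have hkey : ∀ y t' : ℝ, a < ↑y → y < t' → (t':EReal) < b → U y ≠ 0 → U y ≠ ∞ →
      ∫⁻ s in Set.Ioo y t', w s ≤ C ^ q * U y ^ δ := fun y t' h1 h2 h3 h4 h5 =>
    key_bound p q hp hq a b v w hv hw.1 C hH y t' h1 h2 h3 h4 h5
  have hSb : ∀ lam : ℝ≥0∞, lam ≠ 0 → lam ≠ ∞ →
      ∫⁻ s in {s : ℝ | s ∈ EIoo a ↑t ∧ lam < U s}, w s ≤ C ^ q * lam ^ δ := fun lam hl0 _ =>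
    slam_bound q δ (by rw [hδdef, sub_nonpos, div_le_iff₀ hp0]; nlinarith) a b w hw.1 U hUmono C hkey t htb hUtT lam hl0
  have hUle : ∀ s ∈ EIoo a ↑t, U s ≤ U t := fun s hs =>
    hUmono (le_of_lt (EReal.coe_lt_coe_iff.1 hs.2))
  have hmain := sum_bound q δ θ κ hθpos rfl a b w hw.1 U hUmono C t hta htb hUt0 hUtT hUle hSb
  have hI : (∫⁻ s in EIoo a (t : EReal), Vp a p v s ^ (q * (ε + 1)) * w s)
      = ∫⁻ s in EIoo a ↑t, U s ^ θ * w s := by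
    apply lintegral_congr; intro s
    rw [hVp, ← ENNReal.rpow_mul]
  set x : ℝ≥0∞ := U t with hxdef
  have h1q : (0:ℝ) ≤ 1/q := by positivity
  calc Vp a p v t ^ (-ε)
        * (∫⁻ s in EIoo a (t : EReal), Vp a p v s ^ (q * (ε + 1)) * w s) ^ (1/q)
      ≤ (x ^ pc) ^ (-ε) * ((C ^ q * x ^ κ * (2:ℝ≥0∞) ^ (-δ) * (1 - (2:ℝ≥0∞) ^ (-κ))⁻¹) ^ (1/q))
        := by
        rw [hVp, hI]
        exact mul_le_mul_right (ENNReal.rpow_le_rpow hmain h1q) _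
    _ = x ^ (pc * (-ε)) * ((C ^ q) ^ (1/q) * (x ^ κ) ^ (1/q) * K ^ (1/q)) := by
        rw [← ENNReal.rpow_mul, hKdef,
          ENNReal.mul_rpow_of_nonneg _ _ h1q, ENNReal.mul_rpow_of_nonneg _ _ h1q,
          ENNReal.mul_rpow_of_nonneg _ _ h1q, ENNReal.mul_rpow_of_nonneg _ _ h1q]
        ring
    _ = x ^ (pc * (-ε)) * (C * x ^ (κ * (1/q)) * K ^ (1/q)) := by
        rw [← ENNReal.rpow_mul C, mul_one_div_cancel hq.ne', ENNReal.rpow_one,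
          ← ENNReal.rpow_mul x]
    _ = (x ^ (pc * (-ε)) * x ^ (κ * (1/q))) * (K ^ (1/q) * C) := by ring
    _ = K ^ (1/q) * C := by
        rw [← ENNReal.rpow_add _ _ hUt0 hUtT, hzero, ENNReal.rpow_zero, one_mul]
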